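/- Let p_X be a probability density in G[0,1]^1_n with weights w_k, k ∈ {0,…,n−1}, and breakpoints 0 = t_0 < t_1 < ⋯ < t_n = 1. Define a_0 = 1/w_0, a_i = 1/w_i − 1/w_{i−1} for i ∈ {1,…,n−1}, b_0 = 0, and b_i = Σ_{j=0}^{i−1}(t_{j+1}−t_j)w_j for i ∈ {1,…,n}. Then the piecewise linear function f(x) = Σ_{i=0}^{n−1} a_i · max(0, x − b_i) satisfies f#U = p_X, i.e., the pushforward of the uniform distribution on [0,1] under f has density p_X. -/

import Mathlib

open MeasureTheory Matrix

lemma plf_exists_piece (s : ℕ → ℝ) : ∀ n : ℕ, 0 < n → ∀ x : ℝ, s 0 ≤ x → x ≤ s n →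
    ∃ i, i < n ∧ s i ≤ x ∧ x ≤ s (i + 1) := by
  intro n
  induction n with
  | zero => intro h; exact absurd h (lt_irrefl 0)
  | succ m ih =>
    intro _ x h0 h1
    rcases Nat.eq_zero_or_pos m with hm | hm
    · subst hm; exact ⟨0, by omega, h0, h1⟩
    · by_cases hx : x ≤ s m
      · obtain ⟨i, hi, h⟩ := ih hm x h0 hx
        exact ⟨i, by omega, h⟩
      · exact ⟨m, by omega, (not_le.1 hx).le, h1⟩

lemma plf_step_mono (s : ℕ → ℝ) (n : ℕ) (h : ∀ k < n, s k ≤ s (k + 1)) :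
    ∀ i j, i ≤ j → j ≤ n → s i ≤ s j := by
  intro i j hij hjn
  induction j, hij using Nat.le_induction with
  | base => exact le_refl _
  | succ j hij ih => exact le_trans (ih (by omega)) (h j (by omega))

/-- Uniform probability measure on the interval `[a, b]`. -/
noncomputable def uniformOnIcc (a b : ℝ) : Measure ℝ :=
  (ENNReal.ofReal (b - a))⁻¹ • volume.restrict (Set.Icc a b)

/-- The pdf of a general one-dimensional histogram distribution with breakpoints `t` and
weights `w`: it equals `w k` on the interval `[t k, t (k+1))`. -/
noncomputable def genHistPdf (n : ℕ) (t w : ℕ → ℝ) (x : ℝ) : ℝ :=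
  ∑ k ∈ Finset.range n, w k * (Set.Ico (t k) (t (k+1))).indicator (fun _ => (1:ℝ)) x

/-- For a general histogram density with weights `w` and breakpoints `t`,
the piecewise linear function `f(x) = ∑_i a_i max(0, x - b_i)` with `a_0 = 1/w_0`,
`a_i = 1/w_i - 1/w_{i-1}`, `b_0 = 0`, `b_i = ∑_{j<i} (t_{j+1} - t_j) w_j` pushes the uniform
distribution on `[0,1]` forward to that histogram density. -/
theorem plf_pushforward (n : ℕ) (hn : 0 < n) (t w : ℕ → ℝ)
    (ht0 : t 0 = 0) (htn : t n = 1) (htmono : ∀ k < n, t k < t (k+1))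
    (hw : ∀ k < n, 0 < w k)
    (hsum : ∑ k ∈ Finset.range n, w k * (t (k+1) - t k) = 1)
    (f : ℝ → ℝ)
    (hf : ∀ y, f y = ∑ i ∈ Finset.range n,
      (if i = 0 then 1 / w 0 else 1 / w i - 1 / w (i-1)) *
        max 0 (y - ∑ j ∈ Finset.range i, (t (j+1) - t j) * w j)) :
    Measure.map f (uniformOnIcc 0 1)
      = volume.withDensity fun y => ENNReal.ofReal (genHistPdf n t w y) := by
  classical
  set b : ℕ → ℝ := fun i => ∑ j ∈ Finset.range i, (t (j+1) - t j) * w j with hbdef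
  set G : ℝ → ℝ := fun x => ∑ k ∈ Finset.range n, w k * max 0 (min x (t (k+1)) - t k) with hGdef
  have hb0 : b 0 = 0 := by simp [hbdef]
  have hbsucc : ∀ i, b (i+1) = b i + (t (i+1) - t i) * w i := by
    intro i; simp [hbdef, Finset.sum_range_succ]
  have hbn : b n = 1 := by
    rw [hbdef, ← hsum]
    exact Finset.sum_congr rfl fun k _ => mul_comm _ _
  -- monotonicity of t and b
  have htle : ∀ i j, i ≤ j → j ≤ n → t i ≤ t j :=
    plf_step_mono t n (fun k hk => (htmono k hk).le)
  have hble : ∀ i j, i ≤ j → j ≤ n → b i ≤ b j := by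
    refine plf_step_mono b n (fun k hk => ?_)
    rw [hbsucc k]
    nlinarith [htmono k hk, hw k hk]
  -- piecewise formula for f
  have hbapp : ∀ m : ℕ, (∑ j ∈ Finset.range m, (t (j+1) - t j) * w j) = b m := fun m => rfl
  have htel : ∀ i, i < n → ∀ y : ℝ,
      (∑ j ∈ Finset.range (i+1),
        (if j = 0 then 1 / w 0 else 1 / w j - 1 / w (j-1)) * (y - b j))
        = t i + (y - b i) / w i := by
    intro i
    induction i with
    | zero =>
      intro _ y
      simp [Finset.sum_range_one, hb0, ht0]
      ring
    | succ i ih =>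
      intro hi1 y
      have hi : i < n := by omega
      rw [Finset.sum_range_succ, ih hi]
      have hwi := (hw i hi).ne'
      have hwi1 := (hw (i+1) hi1).ne'
      have hb := hbsucc i
      simp only [Nat.succ_ne_zero, if_false, Nat.add_sub_cancel]
      rw [hb]
      field_simp
      ring
  have hfpiece : ∀ i, i < n → ∀ y : ℝ, b i ≤ y → y ≤ b (i+1) →
      f y = t i + (y - b i) / w i := by
    intro i hi y hby hyb
    rw [hf y]
    simp only [hbapp]
    have hsub : Finset.range (i+1) ⊆ Finset.range n := Finset.range_subset_range.2 hi
    have hz : ∀ j ∈ Finset.range n, j ∉ Finset.range (i+1) →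
        (if j = 0 then 1 / w 0 else 1 / w j - 1 / w (j-1)) * max 0 (y - b j) = 0 := by
      intro j hj hj'
      have hjn := Finset.mem_range.1 hj
      have hj1 : i + 1 ≤ j := by
        by_contra hc
        exact hj' (Finset.mem_range.2 (by omega))
      have : y ≤ b j := le_trans hyb (hble (i+1) j hj1 hjn.le)
      rw [max_eq_left (by linarith), mul_zero]
    have hmax : ∀ j ∈ Finset.range (i+1),
        (if j = 0 then 1 / w 0 else 1 / w j - 1 / w (j-1)) * max 0 (y - b j)
          = (if j = 0 then 1 / w 0 else 1 / w j - 1 / w (j-1)) * (y - b j) := by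
      intro j hj
      have hji : j ≤ i := by have := Finset.mem_range.1 hj; omega
      have : b j ≤ y := le_trans (hble j i hji hi.le) hby
      rw [max_eq_right (by linarith)]
    rw [← Finset.sum_subset hsub hz, Finset.sum_congr rfl hmax, htel i hi y]
  -- piecewise formula for G
  have hGpiece : ∀ i, i < n → ∀ x : ℝ, t i ≤ x → x ≤ t (i+1) →
      G x = b i + (x - t i) * w i := by
    intro i hi x htx hxt
    have hsub : Finset.range (i+1) ⊆ Finset.range n := Finset.range_subset_range.2 hi
    have hz : ∀ k ∈ Finset.range n, k ∉ Finset.range (i+1) →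
        w k * max 0 (min x (t (k+1)) - t k) = 0 := by
      intro k hk hk'
      have hkn := Finset.mem_range.1 hk
      have hk1 : i + 1 ≤ k := by
        by_contra hc
        exact hk' (Finset.mem_range.2 (by omega))
      have h1 : x ≤ t k := le_trans hxt (htle (i+1) k hk1 hkn.le)
      have h2 : min x (t (k+1)) ≤ x := min_le_left _ _
      rw [max_eq_left (by linarith), mul_zero]
    have hmax : ∀ k ∈ Finset.range i,
        w k * max 0 (min x (t (k+1)) - t k) = (t (k+1) - t k) * w k := by
      intro k hk
      have hki := Finset.mem_range.1 hk
      have h1 : t (k+1) ≤ x := le_trans (htle (k+1) i hki hi.le) htx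
      have h2 : t k ≤ t (k+1) := (htmono k (by omega)).le
      rw [min_eq_right h1, max_eq_right (by linarith)]
      ring
    simp only [hGdef]
    rw [← Finset.sum_subset hsub hz, Finset.sum_range_succ, Finset.sum_congr rfl hmax,
      min_eq_left hxt, max_eq_right (by linarith : (0:ℝ) ≤ x - t i)]
    have : (∑ k ∈ Finset.range i, (t (k+1) - t k) * w k) = b i := rfl
    rw [this]
    ring
  -- basic bounds for G
  have hGnn : ∀ x, 0 ≤ G x := by
    intro x
    refine Finset.sum_nonneg fun k hk => ?_
    exact mul_nonneg (hw k (Finset.mem_range.1 hk)).le (le_max_left _ _)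
  have hGle1 : ∀ x, G x ≤ 1 := by
    intro x
    rw [← hsum, hGdef]
    refine Finset.sum_le_sum fun k hk => ?_
    have hk' := Finset.mem_range.1 hk
    refine mul_le_mul_of_nonneg_left ?_ (hw k hk').le
    refine max_le ?_ ?_
    · nlinarith [htmono k hk']
    · linarith [min_le_right x (t (k+1))]
  have hGneg : ∀ x : ℝ, x < 0 → G x = 0 := by
    intro x hx
    refine Finset.sum_eq_zero fun k hk => ?_
    have hk' := Finset.mem_range.1 hk
    have h1 : (0:ℝ) ≤ t k := ht0 ▸ htle 0 k (Nat.zero_le _) hk'.le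
    have : max 0 (min x (t (k+1)) - t k) = 0 := by
      refine max_eq_left ?_
      have := min_le_left x (t (k+1)); linarith
    rw [this, mul_zero]
  have hGbig : ∀ x : ℝ, 1 ≤ x → G x = 1 := by
    intro x hx
    rw [← hbn, hbdef, hGdef]
    refine Finset.sum_congr rfl fun k hk => ?_
    have hk' := Finset.mem_range.1 hk
    have h1 : t (k+1) ≤ x := le_trans (htn ▸ htle (k+1) n hk' (le_refl n)) hx
    rw [min_eq_right h1, max_eq_right (by nlinarith [htmono k hk'])]
    ring
  -- strict monotonicity of f on [0,1]
  have hfsmono : ∀ y z : ℝ, y ∈ Set.Icc (0:ℝ) 1 → z ∈ Set.Icc (0:ℝ) 1 → y < z →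
      f y < f z := by
    intro y z hy hz hyz
    obtain ⟨i, hi, hbiy, hybi⟩ := plf_exists_piece b n hn y (hb0 ▸ hy.1) (hbn ▸ hy.2)
    obtain ⟨j, hj, hbjz, hzbj⟩ := plf_exists_piece b n hn z (hb0 ▸ hz.1) (hbn ▸ hz.2)
    have hwi := hw i hi
    have hwj := hw j hj
    have hij : i ≤ j := by
      by_contra hc
      push_neg at hc
      have : b (j+1) ≤ b i := hble (j+1) i (by omega) hi.le
      linarith
    rw [hfpiece i hi y hbiy hybi, hfpiece j hj z hbjz hzbj]
    rcases eq_or_lt_of_le hij with rfl | hlt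
    · have : (y - b i) / w i < (z - b i) / w i :=
        (div_lt_div_iff_of_pos_right hwi).2 (by linarith)
      linarith
    · -- i < j
      have hbs := hbsucc i
      have hbsj := hbsucc j
      have h2 : t j ≤ t j + (z - b j) / w j := by
        have : 0 ≤ (z - b j) / w j := div_nonneg (by linarith) hwj.le
        linarith
      rcases eq_or_lt_of_le (Nat.succ_le_of_lt hlt) with hji | hji
      · -- j = i + 1
        rcases eq_or_lt_of_le hybi with hye | hye
        · -- y = b (i+1)
          have hfy : t i + (y - b i) / w i = t (i+1) := by
            have : y - b i = (t (i+1) - t i) * w i := by rw [hye, hbs]; ring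
            rw [this]
            field_simp
            ring
          have hzb : b j < z := by
            rw [← hji, ← hye]; exact hyz
          have : 0 < (z - b j) / w j := div_pos (by linarith) hwj
          have hj' : t (i+1) = t j := congrArg t hji
          rw [hfy, hj']
          linarith
        · -- y < b (i+1)
          have h1 : (y - b i) / w i < t (i+1) - t i := by
            rw [div_lt_iff₀ hwi]
            nlinarith
          have : t (i+1) = t j := congrArg t hji
          linarith
      · -- i + 1 < j
        have h1 : (y - b i) / w i ≤ t (i+1) - t i := by
          rw [div_le_iff₀ hwi]
          nlinarith
        have h3 : t (i+1) < t (i+2) := htmono (i+1) (by omega)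
        have h4 : t (i+2) ≤ t j := htle (i+2) j (by omega) hj.le
        linarith
  have hfmono : ∀ y z : ℝ, y ∈ Set.Icc (0:ℝ) 1 → z ∈ Set.Icc (0:ℝ) 1 → y ≤ z →
      f y ≤ f z := by
    intro y z hy hz hyz
    rcases eq_or_lt_of_le hyz with h | h
    · rw [h]
    · exact (hfsmono y z hy hz h).le
  -- bounds for f on [0,1]
  have hfbound : ∀ y : ℝ, y ∈ Set.Icc (0:ℝ) 1 → 0 ≤ f y ∧ f y ≤ 1 := by
    intro y hy
    obtain ⟨i, hi, hbi, hbi1⟩ := plf_exists_piece b n hn y (hb0 ▸ hy.1) (hbn ▸ hy.2)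
    rw [hfpiece i hi y hbi hbi1]
    have hwi := hw i hi
    have h0 : (0:ℝ) ≤ t i := ht0 ▸ htle 0 i (Nat.zero_le _) hi.le
    have h1 : t (i+1) ≤ 1 := htn ▸ htle (i+1) n hi (le_refl n)
    have hbs := hbsucc i
    constructor
    · have : 0 ≤ (y - b i) / w i := div_nonneg (by linarith) hwi.le
      linarith
    · have : (y - b i) / w i ≤ t (i+1) - t i := by
        rw [div_le_iff₀ hwi]
        nlinarith
      linarith
  -- f (G x) = x for x in [0,1]
  have hfG : ∀ x : ℝ, 0 ≤ x → x ≤ 1 → f (G x) = x := by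
    intro x hx0 hx1
    obtain ⟨i, hi, hti, hti1⟩ := plf_exists_piece t n hn x (ht0 ▸ hx0) (htn ▸ hx1)
    have hwi := hw i hi
    have hGx : G x = b i + (x - t i) * w i := hGpiece i hi x hti hti1
    have hb1 : b i ≤ G x := by nlinarith
    have hb2 : G x ≤ b (i+1) := by rw [hbsucc i]; nlinarith
    rw [hfpiece i hi _ hb1 hb2, hGx]
    field_simp
    ring
  -- the preimage computation
  have huni : uniformOnIcc 0 1 = volume.restrict (Set.Icc 0 1) := by
    unfold uniformOnIcc
    norm_num
  have hmeasf : Measurable f := by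
    have : f = fun y => ∑ i ∈ Finset.range n,
        (if i = 0 then 1 / w 0 else 1 / w i - 1 / w (i-1)) *
          max 0 (y - ∑ j ∈ Finset.range i, (t (j+1) - t j) * w j) := funext hf
    rw [this]
    exact Finset.measurable_sum _ fun i _ =>
      (measurable_const.mul (measurable_const.max (measurable_id.sub measurable_const)))
  have hLHS : ∀ x : ℝ, Measure.map f (uniformOnIcc 0 1) (Set.Iic x)
      = ENNReal.ofReal (G x) := by
    intro x
    rw [huni, Measure.map_apply hmeasf measurableSet_Iic,
      Measure.restrict_apply (hmeasf measurableSet_Iic)]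
    rcases lt_or_ge x 0 with hx | hx
    · have hempty : f ⁻¹' Set.Iic x ∩ Set.Icc 0 1 = ∅ := by
        rw [Set.eq_empty_iff_forall_notMem]
        rintro y ⟨hfy, hy⟩
        have h0 : 0 ≤ f y := (hfbound y hy).1
        have h1 : f y ≤ x := hfy
        linarith
      rw [hempty, hGneg x hx]
      simp
    · rcases le_or_gt x 1 with hx1 | hx1
      · have hset : f ⁻¹' Set.Iic x ∩ Set.Icc 0 1 = Set.Icc 0 (G x) := by
          ext y
          simp only [Set.mem_inter_iff, Set.mem_preimage, Set.mem_Iic, Set.mem_Icc]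
          constructor
          · rintro ⟨hfy, hy0, hy1⟩
            refine ⟨hy0, ?_⟩
            by_contra hc
            push_neg at hc
            have := hfsmono (G x) y ⟨hGnn x, hGle1 x⟩ ⟨hy0, hy1⟩ hc
            rw [hfG x hx hx1] at this
            linarith
          · rintro ⟨hy0, hyG⟩
            have hy1 : y ≤ 1 := le_trans hyG (hGle1 x)
            refine ⟨?_, hy0, hy1⟩
            have := hfmono y (G x) ⟨hy0, hy1⟩ ⟨hGnn x, hGle1 x⟩ hyG
            rwa [hfG x hx hx1] at this
        rw [hset, Real.volume_Icc, sub_zero]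
      · have hset : f ⁻¹' Set.Iic x ∩ Set.Icc 0 1 = Set.Icc 0 1 := by
          ext y
          simp only [Set.mem_inter_iff, Set.mem_preimage, Set.mem_Iic, Set.mem_Icc]
          constructor
          · rintro ⟨_, h⟩; exact h
          · intro h
            exact ⟨le_trans (hfbound y ⟨h.1, h.2⟩).2 hx1.le, h⟩
        rw [hset, Real.volume_Icc, hGbig x hx1.le, sub_zero]
  have hRHS : ∀ x : ℝ, (volume.withDensity fun y => ENNReal.ofReal (genHistPdf n t w y))
      (Set.Iic x) = ENNReal.ofReal (G x) := by
    intro x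
    rw [withDensity_apply _ measurableSet_Iic]
    have hpt : ∀ y : ℝ, ENNReal.ofReal (genHistPdf n t w y)
        = ∑ k ∈ Finset.range n,
            (Set.Ico (t k) (t (k+1))).indicator (fun _ => ENNReal.ofReal (w k)) y := by
      intro y
      rw [genHistPdf, ENNReal.ofReal_sum_of_nonneg (fun k hk => ?_)]
      · refine Finset.sum_congr rfl fun k hk => ?_
        by_cases hy : y ∈ Set.Ico (t k) (t (k+1))
        · rw [Set.indicator_of_mem hy, Set.indicator_of_mem hy, mul_one]
        · rw [Set.indicator_of_notMem hy, Set.indicator_of_notMem hy, mul_zero,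
            ENNReal.ofReal_zero]
      · exact mul_nonneg (hw k (Finset.mem_range.1 hk)).le
          (Set.indicator_nonneg (fun _ _ => zero_le_one) y)
    simp_rw [hpt]
    rw [lintegral_finset_sum _ (fun k _ => measurable_const.indicator measurableSet_Ico)]
    have hterm : ∀ k ∈ Finset.range n,
        (∫⁻ y in Set.Iic x,
            (Set.Ico (t k) (t (k+1))).indicator (fun _ => ENNReal.ofReal (w k)) y)
          = ENNReal.ofReal (w k * max 0 (min x (t (k+1)) - t k)) := by
      intro k hk
      have hkn := Finset.mem_range.1 hk
      rw [lintegral_indicator measurableSet_Ico, setLIntegral_const,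
        Measure.restrict_apply measurableSet_Ico]
      have hvol : volume (Set.Ico (t k) (t (k+1)) ∩ Set.Iic x)
          = ENNReal.ofReal (min x (t (k+1)) - t k) := by
        rcases le_or_gt (t (k+1)) x with h | h
        · rw [Set.inter_eq_left.2 (fun y hy => Set.mem_Iic.2 (le_trans hy.2.le h)),
            Real.volume_Ico, min_eq_right h]
        · have heq : Set.Ico (t k) (t (k+1)) ∩ Set.Iic x = Set.Icc (t k) x := by
            ext y
            simp only [Set.mem_inter_iff, Set.mem_Ico, Set.mem_Iic, Set.mem_Icc]
            constructor
            · rintro ⟨⟨h1, _⟩, h2⟩; exact ⟨h1, h2⟩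
            · rintro ⟨h1, h2⟩; exact ⟨⟨h1, lt_of_le_of_lt h2 h⟩, h2⟩
          rw [heq, Real.volume_Icc, min_eq_left h.le]
      rw [hvol]
      have hor : ENNReal.ofReal (min x (t (k+1)) - t k)
          = ENNReal.ofReal (max 0 (min x (t (k+1)) - t k)) := by
        rcases le_or_gt 0 (min x (t (k+1)) - t k) with h | h
        · rw [max_eq_right h]
        · rw [max_eq_left h.le, ENNReal.ofReal_of_nonpos h.le, ENNReal.ofReal_zero]
      rw [hor, ← ENNReal.ofReal_mul (hw k hkn).le]
    rw [Finset.sum_congr rfl hterm,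
      ← ENNReal.ofReal_sum_of_nonneg (fun k hk =>
        mul_nonneg (hw k (Finset.mem_range.1 hk)).le (le_max_left _ _))]
  haveI hfin : IsFiniteMeasure (Measure.map f (uniformOnIcc 0 1)) := by
    constructor
    rw [huni, Measure.map_apply hmeasf MeasurableSet.univ, Set.preimage_univ,
      Measure.restrict_apply MeasurableSet.univ, Set.univ_inter, Real.volume_Icc]
    exact ENNReal.ofReal_lt_top
  exact Measure.ext_of_Iic _ _ (fun x => (hLHS x).trans (hRHS x).symm)
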